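/- For all real numbers M > 0, D > 0, B > 0, the integral (1/(2π)) ∫_{-∞}^{∞} B / ((B − Mω²)² + D²ω²) dω equals 1/(2D). (Equivalently, the squared H₂ norm of the SMIB transfer function G(s) = √B/(Ms² + Ds + B) equals 1/(2D), independently of the inertia M.) -/

import Mathlib

set_option maxHeartbeats 1000000

open MeasureTheory Filter Topology Set Real

/-- Integral over ℝ of a nonnegative function with an explicit antiderivative
having limits at `±∞`. -/
lemma integral_eq_of_antideriv {f F : ℝ → ℝ} (hd : ∀ x, HasDerivAt F (f x) x)
    (h0 : ∀ x, 0 ≤ f x) {l L : ℝ} (hbot : Tendsto F atBot (𝓝 l))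
    (htop : Tendsto F atTop (𝓝 L)) : ∫ x, f x = L - l := by
  have hIoi : ∫ x in Ioi (0:ℝ), f x = L - F 0 :=
    integral_Ioi_of_hasDerivAt_of_nonneg' (fun x _ => hd x) (fun x _ => h0 x) htop
  have hIoi_int : IntegrableOn f (Ioi 0) :=
    integrableOn_Ioi_deriv_of_nonneg' (fun x _ => hd x) (fun x _ => h0 x) htop
  have hdneg : ∀ x : ℝ, HasDerivAt (fun t => -F (-t)) (f (-x)) x := by
    intro x
    have h1 := ((hd (-x)).comp x (hasDerivAt_neg x)).neg
    exact h1.congr_deriv (by ring)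
  have htopneg : Tendsto (fun t : ℝ => -F (-t)) atTop (𝓝 (-l)) :=
    (hbot.comp tendsto_neg_atTop_atBot).neg
  have h2 : ∫ x in Ioi (0:ℝ), f (-x) = -l - -(F (-0)) :=
    integral_Ioi_of_hasDerivAt_of_nonneg' (fun x _ => hdneg x) (fun x _ => h0 _) htopneg
  have h2int : IntegrableOn (fun x => f (-x)) (Ioi 0) :=
    integrableOn_Ioi_deriv_of_nonneg' (fun x _ => hdneg x) (fun x _ => h0 _) htopneg
  rw [integral_comp_neg_Ioi] at h2
  have hIic_int : IntegrableOn f (Iic 0) := by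
    have m : MeasurableEmbedding fun x : ℝ => -x := (Homeomorph.neg ℝ).measurableEmbedding
    rw [← Measure.map_neg_eq_self (volume : Measure ℝ), m.integrableOn_map_iff]
    simp only [Function.comp_def, neg_preimage, neg_Iic, neg_zero]
    exact Iff.mpr integrableOn_Ici_iff_integrableOn_Ioi h2int
  have htot := intervalIntegral.integral_Iic_add_Ioi (μ := volume) hIic_int hIoi_int
  rw [neg_zero] at h2
  linarith

lemma tendsto_inv_atBot_zero' : Tendsto (fun x : ℝ => x⁻¹) atBot (𝓝 0) := by
  have h1 : Tendsto (fun x : ℝ => -x) atBot atTop := tendsto_neg_atBot_atTop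
  have h2 : Tendsto (fun x : ℝ => (-x)⁻¹) atBot (𝓝 0) := tendsto_inv_atTop_zero.comp h1
  have h3 := h2.neg
  rw [neg_zero] at h3
  exact h3.congr fun x => by rw [inv_neg, neg_neg]

lemma tendsto_arctan_comp_atTop {g : ℝ → ℝ} (hg : Tendsto g atTop atTop) :
    Tendsto (fun x => Real.arctan (g x)) atTop (𝓝 (Real.pi/2)) :=
  (Real.tendsto_arctan_atTop.mono_right nhdsWithin_le_nhds).comp hg

lemma tendsto_arctan_comp_atBot {g : ℝ → ℝ} (hg : Tendsto g atBot atBot) :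
    Tendsto (fun x => Real.arctan (g x)) atBot (𝓝 (-(Real.pi/2))) :=
  (Real.tendsto_arctan_atBot.mono_right nhdsWithin_le_nhds).comp hg

/-- The squared H₂ norm of the SMIB transfer function
`G(s) = √B/(Ms² + Ds + B)` equals `1/(2D)`, independently of the inertia `M`:
`(1/(2π)) ∫_{-∞}^{∞} B / ((B − Mω²)² + D²ω²) dω = 1/(2D)`. -/
theorem smib_H2_norm_sq (M D B : ℝ) (hM : 0 < M) (hD : 0 < D) (hB : 0 < B) :
    (1 / (2 * Real.pi)) * (∫ ω : ℝ, B / ((B - M * ω ^ 2) ^ 2 + D ^ 2 * ω ^ 2)) =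
      1 / (2 * D) := by
  have hπ := Real.pi_pos
  have hden : ∀ x : ℝ, 0 < (B - M * x ^ 2) ^ 2 + D ^ 2 * x ^ 2 := by
    intro x
    rcases eq_or_ne x 0 with rfl | hx
    · simpa using pow_pos hB 2
    · have h1 : 0 < D ^ 2 * x ^ 2 := by positivity
      nlinarith [sq_nonneg (B - M * x ^ 2)]
  have h0 : ∀ x : ℝ, 0 ≤ B / ((B - M * x ^ 2) ^ 2 + D ^ 2 * x ^ 2) := by
    intro x; positivity
  suffices h : (∫ ω : ℝ, B / ((B - M * ω ^ 2) ^ 2 + D ^ 2 * ω ^ 2)) = Real.pi / D by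
    rw [h]; field_simp
  rcases lt_trichotomy (D ^ 2) (4 * M * B) with hc | hc | hc
  · -- underdamped case
    set a := Real.sqrt (4 * M * B - D ^ 2) with ha_def
    have ha : a ^ 2 = 4 * M * B - D ^ 2 := Real.sq_sqrt (by linarith)
    have ha0 : 0 < a := Real.sqrt_pos.mpr (by linarith)
    set P : ℝ → ℝ := fun x => M * x ^ 2 + a * x + B with hP_def
    set Q : ℝ → ℝ := fun x => M * x ^ 2 - a * x + B with hQ_def
    have hP : ∀ x, 0 < P x := by
      intro x
      have h4 : 0 < 4 * M * P x := by
        have : 4 * M * P x = (2 * M * x + a) ^ 2 + D ^ 2 := by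
          simp only [hP_def]; linear_combination (-1 : ℝ) * ha
        rw [this]; positivity
      nlinarith
    have hQ : ∀ x, 0 < Q x := by
      intro x
      have h4 : 0 < 4 * M * Q x := by
        have : 4 * M * Q x = (2 * M * x - a) ^ 2 + D ^ 2 := by
          simp only [hQ_def]; linear_combination (-1 : ℝ) * ha
        rw [this]; positivity
      nlinarith
    set F : ℝ → ℝ := fun x => (1 / (4 * a)) * Real.log (P x) - (1 / (4 * a)) * Real.log (Q x)
      + (1 / (2 * D)) * Real.arctan ((2 * M * x - a) / D)
      + (1 / (2 * D)) * Real.arctan ((2 * M * x + a) / D) with hF_def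
    have hd : ∀ x, HasDerivAt F (B / ((B - M * x ^ 2) ^ 2 + D ^ 2 * x ^ 2)) x := by
      intro x
      have hP' : HasDerivAt P (2 * M * x + a) x := by
        have h := (((hasDerivAt_pow 2 x).const_mul M).add ((hasDerivAt_id x).const_mul a)).add_const B
        refine h.congr_deriv ?_; push_cast; ring
      have hQ' : HasDerivAt Q (2 * M * x - a) x := by
        have h := (((hasDerivAt_pow 2 x).const_mul M).sub ((hasDerivAt_id x).const_mul a)).add_const B
        refine h.congr_deriv ?_; push_cast; ring
      have hlogP : HasDerivAt (fun y => (1 / (4 * a)) * Real.log (P y))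
          ((1 / (4 * a)) * ((P x)⁻¹ * (2 * M * x + a))) x :=
        ((Real.hasDerivAt_log (hP x).ne').comp x hP').const_mul _
      have hlogQ : HasDerivAt (fun y => (1 / (4 * a)) * Real.log (Q y))
          ((1 / (4 * a)) * ((Q x)⁻¹ * (2 * M * x - a))) x :=
        ((Real.hasDerivAt_log (hQ x).ne').comp x hQ').const_mul _
      have hinm : HasDerivAt (fun y : ℝ => (2 * M * y - a) / D) (2 * M * 1 / D) x :=
        (((hasDerivAt_id x).const_mul (2 * M)).sub_const a).div_const D
      have hinp : HasDerivAt (fun y : ℝ => (2 * M * y + a) / D) (2 * M * 1 / D) x :=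
        (((hasDerivAt_id x).const_mul (2 * M)).add_const a).div_const D
      have hatm : HasDerivAt (fun y : ℝ => (1 / (2 * D)) * Real.arctan ((2 * M * y - a) / D))
          ((1 / (2 * D)) * (1 / (1 + ((2 * M * x - a) / D) ^ 2) * (2 * M * 1 / D))) x :=
        ((Real.hasDerivAt_arctan _).comp x hinm).const_mul _
      have hatp : HasDerivAt (fun y : ℝ => (1 / (2 * D)) * Real.arctan ((2 * M * y + a) / D))
          ((1 / (2 * D)) * (1 / (1 + ((2 * M * x + a) / D) ^ 2) * (2 * M * 1 / D))) x :=
        ((Real.hasDerivAt_arctan _).comp x hinp).const_mul _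
      have hsum := ((hlogP.sub hlogQ).add hatm).add hatp
      refine hsum.congr_deriv (Eq.symm ?_)
      have em : 1 + ((2 * M * x - a) / D) ^ 2 = 4 * M * Q x / D ^ 2 := by
        simp only [hQ_def]; field_simp; linear_combination ha
      have ep : 1 + ((2 * M * x + a) / D) ^ 2 = 4 * M * P x / D ^ 2 := by
        simp only [hP_def]; field_simp; linear_combination ha
      have hPQ : (B - M * x ^ 2) ^ 2 + D ^ 2 * x ^ 2 = P x * Q x := by
        simp only [hP_def, hQ_def]; linear_combination (x ^ 2) * ha
      rw [hPQ, em, ep]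
      have hPx := (hP x).ne'
      have hQx := (hQ x).ne'
      field_simp
      ring
    -- limits
    have hlinptop : Tendsto (fun x : ℝ => (2 * M * x + a) / D) atTop atTop :=
      (Filter.tendsto_atTop_add_const_right atTop a
        (Filter.Tendsto.const_mul_atTop (by positivity) tendsto_id)).atTop_div_const hD
    have hlinmtop : Tendsto (fun x : ℝ => (2 * M * x - a) / D) atTop atTop :=
      (Filter.tendsto_atTop_add_const_right atTop (-a)
        (Filter.Tendsto.const_mul_atTop (by positivity) tendsto_id)).atTop_div_const hD
    have hlinpbot : Tendsto (fun x : ℝ => (2 * M * x + a) / D) atBot atBot :=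
      (Filter.tendsto_atBot_add_const_right atBot a
        (Filter.Tendsto.const_mul_atBot (by positivity) tendsto_id)).atBot_div_const hD
    have hlinmbot : Tendsto (fun x : ℝ => (2 * M * x - a) / D) atBot atBot :=
      (Filter.tendsto_atBot_add_const_right atBot (-a)
        (Filter.Tendsto.const_mul_atBot (by positivity) tendsto_id)).atBot_div_const hD
    have hratio_top : Tendsto (fun x => P x / Q x) atTop (𝓝 1) := by
      have hbase : Tendsto (fun x : ℝ => (M + a * x⁻¹ + B * x⁻¹ * x⁻¹) / (M - a * x⁻¹ + B * x⁻¹ * x⁻¹))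
          atTop (𝓝 ((M + a * 0 + B * 0 * 0) / (M - a * 0 + B * 0 * 0))) := by
        apply Filter.Tendsto.div
        · exact (tendsto_const_nhds.add (tendsto_inv_atTop_zero.const_mul a)).add
            ((tendsto_inv_atTop_zero.const_mul B).mul tendsto_inv_atTop_zero)
        · exact (tendsto_const_nhds.sub (tendsto_inv_atTop_zero.const_mul a)).add
            ((tendsto_inv_atTop_zero.const_mul B).mul tendsto_inv_atTop_zero)
        · simpa using hM.ne'
      have hval : (M + a * 0 + B * 0 * 0) / (M - a * 0 + B * 0 * 0) = 1 := by
        simp [hM.ne']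
      rw [hval] at hbase
      apply hbase.congr'
      filter_upwards [eventually_ne_atTop (0:ℝ)] with x hx
      have hQx := (hQ x).ne'
      rw [div_eq_div_iff (by
        have hee : M - a * x⁻¹ + B * x⁻¹ * x⁻¹ = Q x * (x⁻¹ * x⁻¹) := by
          simp only [hQ_def]; field_simp
        rw [hee]
        positivity) hQx]
      simp only [hP_def, hQ_def]
      field_simp
    have hratio_bot : Tendsto (fun x => P x / Q x) atBot (𝓝 1) := by
      have hbase : Tendsto (fun x : ℝ => (M + a * x⁻¹ + B * x⁻¹ * x⁻¹) / (M - a * x⁻¹ + B * x⁻¹ * x⁻¹))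
          atBot (𝓝 ((M + a * 0 + B * 0 * 0) / (M - a * 0 + B * 0 * 0))) := by
        apply Filter.Tendsto.div
        · exact (tendsto_const_nhds.add (tendsto_inv_atBot_zero'.const_mul a)).add
            ((tendsto_inv_atBot_zero'.const_mul B).mul tendsto_inv_atBot_zero')
        · exact (tendsto_const_nhds.sub (tendsto_inv_atBot_zero'.const_mul a)).add
            ((tendsto_inv_atBot_zero'.const_mul B).mul tendsto_inv_atBot_zero')
        · simpa using hM.ne'
      have hval : (M + a * 0 + B * 0 * 0) / (M - a * 0 + B * 0 * 0) = 1 := by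
        simp [hM.ne']
      rw [hval] at hbase
      apply hbase.congr'
      filter_upwards [eventually_ne_atBot (0:ℝ)] with x hx
      have hQx := (hQ x).ne'
      rw [div_eq_div_iff (by
        have hee : M - a * x⁻¹ + B * x⁻¹ * x⁻¹ = Q x * (x⁻¹ * x⁻¹) := by
          simp only [hQ_def]; field_simp
        rw [hee]
        positivity) hQx]
      simp only [hP_def, hQ_def]
      field_simp
    have hlog_top : Tendsto (fun x => (1 / (4 * a)) * Real.log (P x)
        - (1 / (4 * a)) * Real.log (Q x)) atTop (𝓝 0) := by
      have h1 : Tendsto (fun x => Real.log (P x / Q x)) atTop (𝓝 0) := by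
        have := (Real.continuousAt_log (x := 1) one_ne_zero).tendsto.comp hratio_top
        simpa [Function.comp_def] using this
      have h2 := h1.const_mul (1 / (4 * a))
      rw [mul_zero] at h2
      apply h2.congr
      intro x
      rw [Real.log_div (hP x).ne' (hQ x).ne']
      ring
    have hlog_bot : Tendsto (fun x => (1 / (4 * a)) * Real.log (P x)
        - (1 / (4 * a)) * Real.log (Q x)) atBot (𝓝 0) := by
      have h1 : Tendsto (fun x => Real.log (P x / Q x)) atBot (𝓝 0) := by
        have := (Real.continuousAt_log (x := 1) one_ne_zero).tendsto.comp hratio_bot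
        simpa [Function.comp_def] using this
      have h2 := h1.const_mul (1 / (4 * a))
      rw [mul_zero] at h2
      apply h2.congr
      intro x
      rw [Real.log_div (hP x).ne' (hQ x).ne']
      ring
    have htop : Tendsto F atTop (𝓝 (0 + (1 / (2 * D)) * (Real.pi / 2)
        + (1 / (2 * D)) * (Real.pi / 2))) := by
      exact (hlog_top.add ((tendsto_arctan_comp_atTop hlinmtop).const_mul _)).add
        ((tendsto_arctan_comp_atTop hlinptop).const_mul _)
    have hbot : Tendsto F atBot (𝓝 (0 + (1 / (2 * D)) * (-(Real.pi / 2))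
        + (1 / (2 * D)) * (-(Real.pi / 2)))) := by
      exact (hlog_bot.add ((tendsto_arctan_comp_atBot hlinmbot).const_mul _)).add
        ((tendsto_arctan_comp_atBot hlinpbot).const_mul _)
    rw [integral_eq_of_antideriv hd h0 hbot htop]
    field_simp
    ring
  · -- critically damped case
    set F : ℝ → ℝ := fun x => x / (2 * (B + M * x ^ 2)) + (1 / D) * Real.arctan (2 * M * x / D)
      with hF_def
    have hq : ∀ x : ℝ, 0 < B + M * x ^ 2 := by intro x; positivity
    have hd : ∀ x, HasDerivAt F (B / ((B - M * x ^ 2) ^ 2 + D ^ 2 * x ^ 2)) x := by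
      intro x
      have hden' : HasDerivAt (fun y : ℝ => 2 * (B + M * y ^ 2)) (4 * M * x) x := by
        have h := (((hasDerivAt_pow 2 x).const_mul M).const_add B).const_mul 2
        refine h.congr_deriv ?_; push_cast; ring
      have hdiv : HasDerivAt (fun y : ℝ => y / (2 * (B + M * y ^ 2)))
          ((1 * (2 * (B + M * x ^ 2)) - x * (4 * M * x)) / (2 * (B + M * x ^ 2)) ^ 2) x :=
        (hasDerivAt_id x).div hden' (by positivity)
      have hin : HasDerivAt (fun y : ℝ => 2 * M * y / D) (2 * M * 1 / D) x :=
        ((hasDerivAt_id x).const_mul (2 * M)).div_const D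
      have hat : HasDerivAt (fun y : ℝ => (1 / D) * Real.arctan (2 * M * y / D))
          ((1 / D) * (1 / (1 + (2 * M * x / D) ^ 2) * (2 * M * 1 / D))) x :=
        ((Real.hasDerivAt_arctan _).comp x hin).const_mul _
      have hsum := hdiv.add hat
      refine hsum.congr_deriv (Eq.symm ?_)
      have e1 : 1 + (2 * M * x / D) ^ 2 = 4 * M * (B + M * x ^ 2) / D ^ 2 := by
        field_simp; linear_combination hc
      have hden_eq : (B - M * x ^ 2) ^ 2 + D ^ 2 * x ^ 2 = (B + M * x ^ 2) ^ 2 := by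
        linear_combination (x ^ 2) * hc
      rw [hden_eq, e1]
      have h1 := (hq x).ne'
      field_simp
      ring
    have hrat_top : Tendsto (fun x : ℝ => x / (2 * (B + M * x ^ 2))) atTop (𝓝 0) := by
      have hbase : Tendsto (fun x : ℝ => x⁻¹ / (2 * (M + B * x⁻¹ * x⁻¹))) atTop
          (𝓝 (0 / (2 * (M + B * 0 * 0)))) := by
        apply Filter.Tendsto.div tendsto_inv_atTop_zero
        · exact (((tendsto_inv_atTop_zero.const_mul B).mul tendsto_inv_atTop_zero).const_add
            M).const_mul 2
        · simpa using hM.ne'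
      rw [show (0:ℝ) / (2 * (M + B * 0 * 0)) = 0 by simp] at hbase
      apply hbase.congr'
      filter_upwards [eventually_ne_atTop (0:ℝ)] with x hx
      have hxx : (0:ℝ) < 2 * (M + B * x⁻¹ * x⁻¹) := by
        nlinarith [mul_nonneg hB.le (sq_nonneg x⁻¹)]
      rw [div_eq_div_iff hxx.ne' (by positivity : (0:ℝ) < 2 * (B + M * x ^ 2)).ne']
      field_simp
      ring
    have hrat_bot : Tendsto (fun x : ℝ => x / (2 * (B + M * x ^ 2))) atBot (𝓝 0) := by
      have hbase : Tendsto (fun x : ℝ => x⁻¹ / (2 * (M + B * x⁻¹ * x⁻¹))) atBot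
          (𝓝 (0 / (2 * (M + B * 0 * 0)))) := by
        apply Filter.Tendsto.div tendsto_inv_atBot_zero'
        · exact (((tendsto_inv_atBot_zero'.const_mul B).mul tendsto_inv_atBot_zero').const_add
            M).const_mul 2
        · simpa using hM.ne'
      rw [show (0:ℝ) / (2 * (M + B * 0 * 0)) = 0 by simp] at hbase
      apply hbase.congr'
      filter_upwards [eventually_ne_atBot (0:ℝ)] with x hx
      have hxx : (0:ℝ) < 2 * (M + B * x⁻¹ * x⁻¹) := by
        nlinarith [mul_nonneg hB.le (sq_nonneg x⁻¹)]
      rw [div_eq_div_iff hxx.ne' (by positivity : (0:ℝ) < 2 * (B + M * x ^ 2)).ne']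
      field_simp
      ring
    have hlin_top : Tendsto (fun x : ℝ => 2 * M * x / D) atTop atTop :=
      (Filter.Tendsto.const_mul_atTop (by positivity) tendsto_id).atTop_div_const hD
    have hlin_bot : Tendsto (fun x : ℝ => 2 * M * x / D) atBot atBot :=
      (Filter.Tendsto.const_mul_atBot (by positivity) tendsto_id).atBot_div_const hD
    have htop : Tendsto F atTop (𝓝 (0 + (1 / D) * (Real.pi / 2))) :=
      hrat_top.add ((tendsto_arctan_comp_atTop hlin_top).const_mul _)
    have hbot : Tendsto F atBot (𝓝 (0 + (1 / D) * (-(Real.pi / 2)))) :=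
      hrat_bot.add ((tendsto_arctan_comp_atBot hlin_bot).const_mul _)
    rw [integral_eq_of_antideriv hd h0 hbot htop]
    field_simp
    ring
  · -- overdamped case
    set b := Real.sqrt (D ^ 2 - 4 * M * B) with hb_def
    have hb : b ^ 2 = D ^ 2 - 4 * M * B := Real.sq_sqrt (by linarith)
    have hb0 : 0 < b := Real.sqrt_pos.mpr (by linarith)
    have hbD : b < D := by nlinarith
    have hDp : (0:ℝ) < D + b := by linarith
    have hDm : (0:ℝ) < D - b := by linarith
    set F : ℝ → ℝ := fun x => (-((D - b) / (2 * D * b))) * Real.arctan (2 * M * x / (D + b))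
      + ((D + b) / (2 * D * b)) * Real.arctan (2 * M * x / (D - b)) with hF_def
    have hd : ∀ x, HasDerivAt F (B / ((B - M * x ^ 2) ^ 2 + D ^ 2 * x ^ 2)) x := by
      intro x
      have hin1 : HasDerivAt (fun y : ℝ => 2 * M * y / (D + b)) (2 * M * 1 / (D + b)) x :=
        ((hasDerivAt_id x).const_mul (2 * M)).div_const (D + b)
      have hin2 : HasDerivAt (fun y : ℝ => 2 * M * y / (D - b)) (2 * M * 1 / (D - b)) x :=
        ((hasDerivAt_id x).const_mul (2 * M)).div_const (D - b)
      have hat1 : HasDerivAt (fun y : ℝ => (-((D - b) / (2 * D * b))) * Real.arctan (2 * M * y / (D + b)))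
          ((-((D - b) / (2 * D * b))) * (1 / (1 + (2 * M * x / (D + b)) ^ 2) * (2 * M * 1 / (D + b)))) x :=
        ((Real.hasDerivAt_arctan _).comp x hin1).const_mul _
      have hat2 : HasDerivAt (fun y : ℝ => ((D + b) / (2 * D * b)) * Real.arctan (2 * M * y / (D - b)))
          (((D + b) / (2 * D * b)) * (1 / (1 + (2 * M * x / (D - b)) ^ 2) * (2 * M * 1 / (D - b)))) x :=
        ((Real.hasDerivAt_arctan _).comp x hin2).const_mul _
      have hsum := hat1.add hat2
      refine hsum.congr_deriv (Eq.symm ?_)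
      have hA1 : (0:ℝ) < (D + b) ^ 2 + 4 * M ^ 2 * x ^ 2 := by positivity
      have hA2 : (0:ℝ) < (D - b) ^ 2 + 4 * M ^ 2 * x ^ 2 := by positivity
      have hden_eq : (B - M * x ^ 2) ^ 2 + D ^ 2 * x ^ 2 =
          ((D + b) ^ 2 + 4 * M ^ 2 * x ^ 2) * ((D - b) ^ 2 + 4 * M ^ 2 * x ^ 2) / (16 * M ^ 2) := by
        rw [eq_div_iff (by positivity)]
        linear_combination (-(b ^ 2) + D ^ 2 + 4 * M * B - 8 * M ^ 2 * x ^ 2) * hb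
      have hmul : (D + b) * (D - b) = 4 * M * B := by linear_combination -hb
      have h1 : (-((D - b) / (2 * D * b))) * (1 / (1 + (2 * M * x / (D + b)) ^ 2) * (2 * M * 1 / (D + b)))
          = -(4 * M ^ 2 * B) / (D * b * ((D + b) ^ 2 + 4 * M ^ 2 * x ^ 2)) := by
        rw [show B = (D + b) * (D - b) / (4 * M) by rw [eq_div_iff (by positivity)]; linear_combination -hmul]
        have e : (1:ℝ) + (2 * M * x / (D + b)) ^ 2 = ((D + b) ^ 2 + 4 * M ^ 2 * x ^ 2) / (D + b) ^ 2 := by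
          field_simp; ring
        rw [e]
        field_simp
      have h2 : ((D + b) / (2 * D * b)) * (1 / (1 + (2 * M * x / (D - b)) ^ 2) * (2 * M * 1 / (D - b)))
          = (4 * M ^ 2 * B) / (D * b * ((D - b) ^ 2 + 4 * M ^ 2 * x ^ 2)) := by
        rw [show B = (D + b) * (D - b) / (4 * M) by rw [eq_div_iff (by positivity)]; linear_combination -hmul]
        have e : (1:ℝ) + (2 * M * x / (D - b)) ^ 2 = ((D - b) ^ 2 + 4 * M ^ 2 * x ^ 2) / (D - b) ^ 2 := by
          field_simp; ring
        rw [e]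
        field_simp
      rw [h1, h2, hden_eq]
      have hA1' := hA1.ne'
      have hA2' := hA2.ne'
      field_simp
      ring
    have hlin1_top : Tendsto (fun x : ℝ => 2 * M * x / (D + b)) atTop atTop :=
      (Filter.Tendsto.const_mul_atTop (by positivity) tendsto_id).atTop_div_const hDp
    have hlin2_top : Tendsto (fun x : ℝ => 2 * M * x / (D - b)) atTop atTop :=
      (Filter.Tendsto.const_mul_atTop (by positivity) tendsto_id).atTop_div_const hDm
    have hlin1_bot : Tendsto (fun x : ℝ => 2 * M * x / (D + b)) atBot atBot :=
      (Filter.Tendsto.const_mul_atBot (by positivity) tendsto_id).atBot_div_const hDp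
    have hlin2_bot : Tendsto (fun x : ℝ => 2 * M * x / (D - b)) atBot atBot :=
      (Filter.Tendsto.const_mul_atBot (by positivity) tendsto_id).atBot_div_const hDm
    have htop : Tendsto F atTop (𝓝 ((-((D - b) / (2 * D * b))) * (Real.pi / 2)
        + ((D + b) / (2 * D * b)) * (Real.pi / 2))) :=
      ((tendsto_arctan_comp_atTop hlin1_top).const_mul _).add
        ((tendsto_arctan_comp_atTop hlin2_top).const_mul _)
    have hbot : Tendsto F atBot (𝓝 ((-((D - b) / (2 * D * b))) * (-(Real.pi / 2))
        + ((D + b) / (2 * D * b)) * (-(Real.pi / 2)))) :=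
      ((tendsto_arctan_comp_atBot hlin1_bot).const_mul _).add
        ((tendsto_arctan_comp_atBot hlin2_bot).const_mul _)
    rw [integral_eq_of_antideriv hd h0 hbot htop]
    field_simp
    ring
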